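/- Let q ∈ (0,1/2), p̄ > 0, α > 2p̄ and ε > 0. Then (α + ε/2)·(1 − h2((p̄/(α + ε/2)) ⋆ q)) ≤ α·(1 − h2((p̄/α) ⋆ q)) + ε/2. (Equivalently, since x ↦ x·h2((p̄/x) ⋆ q) is increasing, the mutual information bound ℓ(1 − h2((p̄n/ℓ) ⋆ q)) with ℓ = (α + ε/2)n does not exceed nα(1 − h2((p̄/α) ⋆ q)) + nε/2; this is the entropy-deficit step in the babble-and-snoop converse argument.) -/

import Mathlib

/-- Binary entropy (base 2), with the conventions `h2 0 = h2 1 = 0`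
(automatic since `Real.log 0 = 0`). -/
noncomputable def h2 (y : ℝ) : ℝ := -(y * Real.logb 2 y) - (1 - y) * Real.logb 2 (1 - y)

/-- For `x, y ∈ [0,1]`, `x ⋆ y = x(1−y) + y(1−x)`. -/
noncomputable def bstar (x y : ℝ) : ℝ := x * (1 - y) + y * (1 - x)

lemma h2_eq_binEntropy (y : ℝ) : h2 y = Real.binEntropy y / Real.log 2 := by
  simp only [h2, Real.binEntropy, Real.logb, Real.log_inv]
  ring

/-- For `q ∈ (0,1/2)`, `p̄ > 0`, `α > 2p̄` and `ε > 0`,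
`(α + ε/2)·(1 − h2((p̄/(α + ε/2)) ⋆ q)) ≤ α·(1 − h2((p̄/α) ⋆ q)) + ε/2`. -/
theorem entropy_deficit_step (q pbar α ε : ℝ) (hq : q ∈ Set.Ioo (0 : ℝ) (1/2))
    (hpbar : 0 < pbar) (hα : 2 * pbar < α) (hε : 0 < ε) :
    (α + ε/2) * (1 - h2 (bstar (pbar / (α + ε/2)) q))
      ≤ α * (1 - h2 (bstar (pbar / α) q)) + ε/2 := by
  obtain ⟨hq0, hq2⟩ := hq
  have hA : 0 < α := by linarith
  have hB : 0 < α + ε/2 := by linarith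
  have hlog2 : 0 < Real.log 2 := Real.log_pos (by norm_num)
  set s : ℝ := bstar (pbar / α) q with hs_def
  set s' : ℝ := bstar (pbar / (α + ε/2)) q with hs'_def
  set l : ℝ := α / (α + ε/2) with hl_def
  have hl0 : 0 ≤ l := by positivity
  have hl1 : 0 ≤ 1 - l := by
    rw [hl_def, sub_nonneg, div_le_one hB]; linarith
  have hxA : pbar / α < 1/2 := by rw [div_lt_iff₀ hA]; linarith
  have hxA0 : 0 < pbar / α := by positivity
  have hs_mem : s ∈ Set.Icc (0:ℝ) 1 := by
    constructor <;> simp only [hs_def, bstar] <;> nlinarith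
  have hq_mem : q ∈ Set.Icc (0:ℝ) 1 := ⟨hq0.le, by linarith⟩
  have hcomb : s' = l * s + (1 - l) * q := by
    simp only [hs'_def, hs_def, hl_def, bstar]
    field_simp
    ring
  have hconc := Real.strictConcave_binEntropy.concaveOn.2 hs_mem hq_mem hl0 hl1
    (by ring)
  simp only [smul_eq_mul, ← hcomb] at hconc
  have hBq : 0 ≤ Real.binEntropy q := Real.binEntropy_nonneg hq0.le (by linarith)
  have hkey : α * Real.binEntropy s ≤ (α + ε/2) * Real.binEntropy s' := by
    have h1 : l * Real.binEntropy s ≤ Real.binEntropy s' := by nlinarith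
    have h2 : (α + ε/2) * (l * Real.binEntropy s)
        ≤ (α + ε/2) * Real.binEntropy s' := by nlinarith
    have hl_eq : (α + ε/2) * l = α := by rw [hl_def]; field_simp
    rw [← mul_assoc, hl_eq] at h2
    exact h2
  rw [h2_eq_binEntropy, h2_eq_binEntropy]
  have h3 : α * Real.binEntropy s / Real.log 2
      ≤ (α + ε/2) * Real.binEntropy s' / Real.log 2 :=
    (div_le_div_iff_of_pos_right hlog2).2 hkey
  have e1 : (α + ε/2) * (1 - Real.binEntropy s' / Real.log 2)
      = (α + ε/2) - (α + ε/2) * Real.binEntropy s' / Real.log 2 := by ring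
  have e2 : α * (1 - Real.binEntropy s / Real.log 2) + ε/2
      = (α + ε/2) - α * Real.binEntropy s / Real.log 2 := by ring
  rw [e1, e2]
  linarith
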